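/- For all natural numbers m ≥ 1 and every fixed s with 0 ≤ s ≤ m, the sum over r from 0 to m of binom(m,r)·binom(m,s)/binom(2m, r+s) equals (2m+1)/(m+1), where the quotients are taken in the rationals (or reals). -/

import Mathlib

open Finset PowerSeries Nat

/-- Negative binomial convolution: ∑_{i+j=n} C(s+i,s)·C(t+j,t) = C(s+t+1+n, s+t+1). -/
lemma conv_choose (s t n : ℕ) :
    ∑ r ∈ Finset.range (n + 1),
      ((s + r).choose s * (t + (n - r)).choose t : ℚ)
      = ((s + t + 1 + n).choose (s + t + 1) : ℚ) := by
  have h : ((PowerSeries.mk 1 : ℚ⟦X⟧) ^ (s + 1)) * ((PowerSeries.mk 1 : ℚ⟦X⟧) ^ (t + 1))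
      = (PowerSeries.mk 1 : ℚ⟦X⟧) ^ ((s + t + 1) + 1) := by
    rw [← pow_add]; ring_nf
  rw [mk_one_pow_eq_mk_choose_add, mk_one_pow_eq_mk_choose_add,
    mk_one_pow_eq_mk_choose_add] at h
  have h2 := congrArg (PowerSeries.coeff n) h
  rw [PowerSeries.coeff_mul, Finset.Nat.sum_antidiagonal_eq_sum_range_succ_mk] at h2
  simpa using h2

theorem stmt_4 (m s : ℕ) (hm : 1 ≤ m) (hs : s ≤ m) :
    ∑ r ∈ Finset.range (m + 1),
      (m.choose r * m.choose s : ℚ) / ((2 * m).choose (r + s) : ℚ)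
      = (2 * m + 1 : ℚ) / (m + 1 : ℚ) := by
  have key : ∀ r ∈ Finset.range (m + 1),
      (m.choose r * m.choose s : ℚ) / ((2 * m).choose (r + s) : ℚ)
      = ((m ! : ℚ) * m ! / (2 * m)!) *
        ((s + r).choose s * ((m - s) + (m - r)).choose (m - s) : ℚ) := by
    intro r hr
    rw [Finset.mem_range] at hr
    have hr' : r ≤ m := by omega
    rw [Nat.cast_choose ℚ hr', Nat.cast_choose ℚ hs,
      Nat.cast_choose ℚ (show r + s ≤ 2 * m by omega),
      Nat.cast_choose ℚ (show s ≤ s + r by omega),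
      Nat.cast_choose ℚ (show m - s ≤ (m - s) + (m - r) by omega)]
    have e1 : s + r - s = r := by omega
    have e2 : (m - s) + (m - r) - (m - s) = m - r := by omega
    have e3 : 2 * m - (r + s) = (m - s) + (m - r) := by omega
    rw [e1, e2, e3]
    have h1 : (r ! : ℚ) ≠ 0 := Nat.cast_ne_zero.mpr (Nat.factorial_ne_zero r)
    have h2 : (s ! : ℚ) ≠ 0 := Nat.cast_ne_zero.mpr (Nat.factorial_ne_zero s)
    have h3 : ((m - r)! : ℚ) ≠ 0 := Nat.cast_ne_zero.mpr (Nat.factorial_ne_zero _)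
    have h4 : ((m - s)! : ℚ) ≠ 0 := Nat.cast_ne_zero.mpr (Nat.factorial_ne_zero _)
    have h5 : (((m - s) + (m - r))! : ℚ) ≠ 0 :=
      Nat.cast_ne_zero.mpr (Nat.factorial_ne_zero _)
    have h6 : ((r + s)! : ℚ) ≠ 0 := Nat.cast_ne_zero.mpr (Nat.factorial_ne_zero _)
    have h7 : ((2 * m)! : ℚ) ≠ 0 := Nat.cast_ne_zero.mpr (Nat.factorial_ne_zero _)
    have h8 : (m ! : ℚ) ≠ 0 := Nat.cast_ne_zero.mpr (Nat.factorial_ne_zero _)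
    field_simp
    ring
  rw [Finset.sum_congr rfl key, ← Finset.mul_sum]
  have hc : ∑ r ∈ Finset.range (m + 1),
      ((s + r).choose s * ((m - s) + (m - r)).choose (m - s) : ℚ)
      = ((s + (m - s) + 1 + m).choose (s + (m - s) + 1) : ℚ) := conv_choose s (m - s) m
  have e4 : s + (m - s) + 1 + m = 2 * m + 1 := by omega
  have e5 : s + (m - s) + 1 = m + 1 := by omega
  rw [e4, e5] at hc
  rw [hc, Nat.cast_choose ℚ (show m + 1 ≤ 2 * m + 1 by omega)]
  have e6 : 2 * m + 1 - (m + 1) = m := by omega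
  rw [e6]
  have hf1 : ((2 * m + 1)! : ℚ) = (2 * m + 1) * (2 * m)! := by
    rw [Nat.factorial_succ]; push_cast; ring
  have hf2 : ((m + 1)! : ℚ) = (m + 1) * m ! := by
    rw [Nat.factorial_succ]; push_cast; ring
  rw [hf1, hf2]
  have h7 : ((2 * m)! : ℚ) ≠ 0 := Nat.cast_ne_zero.mpr (Nat.factorial_ne_zero _)
  have h8 : (m ! : ℚ) ≠ 0 := Nat.cast_ne_zero.mpr (Nat.factorial_ne_zero _)
  have h9 : (m : ℚ) + 1 ≠ 0 := by positivity
  field_simp
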